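/- Let z ∈ k[X] be nonzero with d(z) = 0 and e(z) = w·z for a natural number w. Then d̂^w(z) ≠ 0 and d̂^{w+1}(z) = 0; that is, the order of z equals its weight: ord(z) = ω(z). -/

import Mathlib

open MvPolynomial Finset

/-- The Weitzenböck derivation `d` on `k[x_0,…,x_n]`: `d(x_i) = x_{i-1}` for
`1 ≤ i ≤ n` and `d(x_0) = 0`. -/
noncomputable def weitz (k : Type*) [Field k] [CharZero k] (n : ℕ) :
    Derivation k (MvPolynomial (Fin (n + 1)) k) (MvPolynomial (Fin (n + 1)) k) :=
  mkDerivation k (fun i : Fin (n + 1) =>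
    if _ : (i : ℕ) = 0 then 0
    else X (⟨(i : ℕ) - 1, by have := i.isLt; omega⟩ : Fin (n + 1)))

/-- The derivation `d̂` on `k[x_0,…,x_n]`: `d̂(x_i) = (i+1)(n−i)·x_{i+1}` for
`0 ≤ i ≤ n−1` and `d̂(x_n) = 0`. -/
noncomputable def dhat (k : Type*) [Field k] [CharZero k] (n : ℕ) :
    Derivation k (MvPolynomial (Fin (n + 1)) k) (MvPolynomial (Fin (n + 1)) k) :=
  mkDerivation k (fun i : Fin (n + 1) =>
    if h : (i : ℕ) = n then 0
    else ((((i : ℕ) + 1) * (n - (i : ℕ)) : ℕ) : k) •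
      X (⟨(i : ℕ) + 1, by have := i.isLt; omega⟩ : Fin (n + 1)))

/-- The derivation `e` on `k[x_0,…,x_n]`: `e(x_i) = (n−2i)·x_i`. -/
noncomputable def ee (k : Type*) [Field k] [CharZero k] (n : ℕ) :
    Derivation k (MvPolynomial (Fin (n + 1)) k) (MvPolynomial (Fin (n + 1)) k) :=
  mkDerivation k (fun i : Fin (n + 1) => ((n : ℤ) - 2 * (i : ℕ)) • X i)

section Aux

variable (k : Type*) [Field k] [CharZero k] (n : ℕ)

lemma ee_X (i : Fin (n+1)) : ee k n (X i) = ((n:k) - 2 * ((i:ℕ):k)) • X i := by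
  rw [ee, mkDerivation_X, ← Int.cast_smul_eq_zsmul k]
  push_cast
  ring_nf

lemma weitz_X_zero (i : Fin (n+1)) (h : (i:ℕ) = 0) : weitz k n (X i) = 0 := by
  rw [weitz, mkDerivation_X, dif_pos h]

lemma weitz_X_pos (i : Fin (n+1)) (h : ¬ (i:ℕ) = 0) :
    weitz k n (X i) = X (⟨(i : ℕ) - 1, by have := i.isLt; omega⟩ : Fin (n + 1)) := by
  rw [weitz, mkDerivation_X, dif_neg h]

lemma dhat_X_top (i : Fin (n+1)) (h : (i:ℕ) = n) : dhat k n (X i) = 0 := by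
  rw [dhat, mkDerivation_X, dif_pos h]

lemma dhat_X (i : Fin (n+1)) (h : ¬ (i:ℕ) = n) :
    dhat k n (X i) = ((((i : ℕ) + 1) * (n - (i : ℕ)) : ℕ) : k) •
      X (⟨(i : ℕ) + 1, by have := i.isLt; omega⟩ : Fin (n + 1)) := by
  rw [dhat, mkDerivation_X, dif_neg h]

lemma comm1 : ⁅weitz k n, dhat k n⁆ = ee k n := by
  apply derivation_ext
  intro i
  have hin : (i : ℕ) ≤ n := by have := i.isLt; omega
  rw [Derivation.commutator_apply, ee_X]
  by_cases hn : (i : ℕ) = n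
  · rw [dhat_X_top k n i hn, map_zero, zero_sub]
    by_cases h0 : (i : ℕ) = 0
    · rw [weitz_X_zero k n i h0, map_zero, neg_zero]
      have : ((n:k) - 2 * ((i:ℕ):k)) = 0 := by
        have hh : n = 0 := by omega
        rw [h0, hh]; norm_num
      rw [this, zero_smul]
    · rw [weitz_X_pos k n i h0, dhat_X k n _ (by simp only [Fin.val_mk]; omega)]
      simp only [Fin.val_mk]
      rw [show (⟨(i:ℕ) - 1 + 1, by omega⟩ : Fin (n+1)) = i from
        Fin.ext (by simp only [Fin.val_mk]; omega)]
      rw [← neg_smul]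
      congr 1
      have h1 : (1:ℕ) ≤ (i:ℕ) := by omega
      push_cast [Nat.cast_sub h1, Nat.cast_sub (by omega : (i:ℕ) - 1 ≤ n)]
      rw [hn]; ring
  · rw [dhat_X k n i hn, Derivation.map_smul]
    rw [weitz_X_pos k n _ (by simp only [Fin.val_mk]; omega)]
    simp only [Fin.val_mk]
    rw [show (⟨(i:ℕ) + 1 - 1, by omega⟩ : Fin (n+1)) = i from
      Fin.ext (by simp only [Fin.val_mk]; omega)]
    by_cases h0 : (i : ℕ) = 0
    · rw [weitz_X_zero k n i h0, map_zero, sub_zero]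
      congr 1
      rw [h0, Nat.sub_zero]
      push_cast
      ring
    · rw [weitz_X_pos k n i h0, dhat_X k n _ (by simp only [Fin.val_mk]; omega)]
      simp only [Fin.val_mk]
      rw [show (⟨(i:ℕ) - 1 + 1, by omega⟩ : Fin (n+1)) = i from
        Fin.ext (by simp only [Fin.val_mk]; omega)]
      rw [← sub_smul]
      congr 1
      push_cast [Nat.cast_sub hin, Nat.cast_sub (by omega : (i:ℕ) - 1 ≤ n),
        Nat.cast_sub (by omega : 1 ≤ (i:ℕ))]
      ring

lemma comm2 : ⁅ee k n, dhat k n⁆ = (-2 : ℤ) • dhat k n := by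
  apply derivation_ext
  intro i
  have hin : (i : ℕ) ≤ n := by have := i.isLt; omega
  rw [Derivation.commutator_apply]
  rw [show ((-2 : ℤ) • dhat k n) (X i) = (-2 : ℤ) • (dhat k n (X i)) from rfl]
  by_cases hn : (i : ℕ) = n
  · rw [dhat_X_top k n i hn, map_zero, ee_X, Derivation.map_smul, dhat_X_top k n i hn]
    simp
  · rw [dhat_X k n i hn, Derivation.map_smul, ee_X, ee_X, Derivation.map_smul, dhat_X k n i hn,
      smul_smul, smul_smul, ← sub_smul, ← Int.cast_smul_eq_zsmul k, smul_smul]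
    congr 1
    simp only [Fin.val_mk]
    push_cast [Nat.cast_sub hin]
    ring

lemma weight_single (j : Fin (n+1)) (m : ℕ) :
    Finsupp.weight (fun i : Fin (n+1) => n - (i:ℕ)) (Finsupp.single j m) = m * (n - (j:ℕ)) := by
  rw [Finsupp.weight_apply, Finsupp.sum_single_index] <;> simp

lemma support_dhat (p : MvPolynomial (Fin (n+1)) k) (σ : Fin (n+1) →₀ ℕ)
    (hσ : σ ∈ (dhat k n p).support) :
    ∃ τ ∈ p.support,
      Finsupp.weight (fun i : Fin (n+1) => n - (i:ℕ)) σ + 1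
        ≤ Finsupp.weight (fun i : Fin (n+1) => n - (i:ℕ)) τ := by
  classical
  set W := Finsupp.weight (R := ℕ) (fun i : Fin (n+1) => n - (i:ℕ)) with hW
  have hp : dhat k n p = ∑ τ ∈ p.support, dhat k n (monomial τ (coeff τ p)) := by
    conv_lhs => rw [as_sum p]
    rw [map_sum]
  rw [hp] at hσ
  obtain ⟨τ, hτ, hσ2⟩ := Finset.mem_biUnion.mp (support_sum hσ)
  refine ⟨τ, hτ, ?_⟩
  rw [show dhat k n (monomial τ (coeff τ p)) = coeff τ p • τ.sum fun i m =>
      monomial (τ - Finsupp.single i 1) (m : k) •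
        ((if h : (i : ℕ) = n then 0
        else ((((i : ℕ) + 1) * (n - (i : ℕ)) : ℕ) : k) •
          X (⟨(i : ℕ) + 1, by have := i.isLt; omega⟩ : Fin (n + 1))) : MvPolynomial (Fin (n+1)) k)
      by rw [dhat]
         exact mkDerivation_monomial k (fun i : Fin (n + 1) =>
           if h : (i : ℕ) = n then 0
           else ((((i : ℕ) + 1) * (n - (i : ℕ)) : ℕ) : k) •
             X (⟨(i : ℕ) + 1, by have := i.isLt; omega⟩ : Fin (n + 1))) τ (coeff τ p)] at hσ2
  have hσ3 := support_smul hσ2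
  rw [Finsupp.sum] at hσ3
  obtain ⟨i, hi, hσ4⟩ := Finset.mem_biUnion.mp (support_sum hσ3)
  by_cases hin : (i : ℕ) = n
  · rw [dif_pos hin] at hσ4; simp at hσ4
  rw [dif_neg hin] at hσ4
  rw [smul_eq_mul, mul_smul_comm] at hσ4
  have hσ5 := support_smul hσ4
  rw [X, monomial_mul, mul_one] at hσ5
  have hσ6 := support_monomial_subset hσ5
  rw [Finset.mem_singleton] at hσ6
  subst hσ6
  have hτi : τ = (τ - Finsupp.single i 1) + Finsupp.single i 1 := by
    ext j
    by_cases hj : j = i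
    · subst hj
      have : 1 ≤ τ j := by
        rw [Nat.one_le_iff_ne_zero, ← Finsupp.mem_support_iff]; exact hi
      simp [Finsupp.single_apply]
      omega
    · simp [Finsupp.single_apply, hj, Ne.symm hj]
  have hlt : (i:ℕ) < n := by have := i.isLt; omega
  calc W (τ - Finsupp.single i 1 + Finsupp.single (⟨(i:ℕ)+1, by omega⟩ : Fin (n+1)) 1) + 1
      = W (τ - Finsupp.single i 1) + (n - ((i:ℕ)+1)) + 1 := by
        rw [map_add, weight_single]; ring_nf
    _ ≤ W (τ - Finsupp.single i 1) + (n - (i:ℕ)) := by omega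
    _ = W τ := by
        conv_rhs => rw [hτi]
        rw [map_add, weight_single]
        ring_nf

lemma dhat_iter_zero : ∀ (N : ℕ) (p : MvPolynomial (Fin (n+1)) k),
    (∀ τ ∈ p.support, Finsupp.weight (fun i : Fin (n+1) => n - (i:ℕ)) τ ≤ N) →
    (⇑(dhat k n))^[N+1] p = 0 := by
  intro N
  induction N with
  | zero =>
    intro p hp
    have hs : (dhat k n p).support = ∅ := by
      by_contra h
      obtain ⟨σ, hσ⟩ := Finset.nonempty_of_ne_empty h
      obtain ⟨τ, hτ, hle⟩ := support_dhat k n p σ hσ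
      have := hp τ hτ
      omega
    simpa using support_eq_empty.mp hs
  | succ N ih =>
    intro p hp
    rw [Function.iterate_succ_apply]
    apply ih
    intro τ hτ
    obtain ⟨τ', hτ', hle⟩ := support_dhat k n p τ hτ
    have := hp τ' hτ'
    omega

lemma dhat_locally_nilpotent (p : MvPolynomial (Fin (n+1)) k) :
    ∃ m, (⇑(dhat k n))^[m] p = 0 := by
  classical
  refine ⟨p.support.sup (Finsupp.weight (fun i : Fin (n+1) => n - (i:ℕ))) + 1, ?_⟩
  apply dhat_iter_zero
  intro τ hτ
  exact Finset.le_sup hτ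

end Aux

/-- For a nonzero `z` with `d(z) = 0` and `e(z) = w·z` (`w ∈ ℕ`),
the order of `z` equals its weight: `d̂^w(z) ≠ 0` and `d̂^{w+1}(z) = 0`. -/
theorem ord_eq_weight (k : Type*) [Field k] [CharZero k] (n : ℕ)
    (z : MvPolynomial (Fin (n + 1)) k) (hz0 : z ≠ 0) (w : ℕ)
    (hd : weitz k n z = 0) (he : ee k n z = (w : k) • z) :
    (⇑(dhat k n))^[w] z ≠ 0 ∧ (⇑(dhat k n))^[w + 1] z = 0 := by
  classical
  set D := dhat k n with hD
  set Z : ℕ → MvPolynomial (Fin (n + 1)) k := fun j => (⇑D)^[j] z with hZ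
  have key1 : ∀ p, weitz k n (D p) = D (weitz k n p) + ee k n p := by
    intro p
    have h := DFunLike.congr_fun (comm1 k n) p
    rw [Derivation.commutator_apply] at h
    rw [sub_eq_iff_eq_add'] at h
    exact h
  have key2 : ∀ p, ee k n (D p) = D (ee k n p) - (2:k) • D p := by
    intro p
    have h := DFunLike.congr_fun (comm2 k n) p
    rw [Derivation.commutator_apply] at h
    rw [sub_eq_iff_eq_add] at h
    rw [h, show ((-2 : ℤ) • dhat k n) p = (-2 : ℤ) • (dhat k n p) from rfl,
      ← Int.cast_smul_eq_zsmul k]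
    push_cast
    rw [neg_smul, ← hD, sub_eq_neg_add]
  have eigen : ∀ j, ee k n (Z j) = ((w:k) - 2*(j:k)) • Z j := by
    intro j
    induction j with
    | zero => simpa [hZ] using he
    | succ j ih =>
      have hstep : Z (j+1) = D (Z j) := by
        rw [hZ]
        exact Function.iterate_succ_apply' _ _ _
      rw [hstep, key2, ih, Derivation.map_smul, ← sub_smul]
      congr 1
      push_cast
      ring
  have lower : ∀ j, weitz k n (Z (j+1)) = (((j:k)+1) * ((w:k) - (j:k))) • Z j := by
    intro j
    induction j with
    | zero =>
      have hstep : Z 1 = D (Z 0) := Function.iterate_succ_apply' _ _ _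
      rw [hstep, key1, show Z 0 = z from rfl, hd, map_zero, zero_add, he]
      congr 1
      push_cast
      ring
    | succ j ih =>
      have hstep : Z (j+2) = D (Z (j+1)) := Function.iterate_succ_apply' _ _ _
      have hstep1 : D (Z j) = Z (j+1) := (Function.iterate_succ_apply' _ _ _).symm
      rw [hstep, key1, ih, Derivation.map_smul, eigen (j+1), hstep1, ← add_smul]
      congr 1
      push_cast
      ring
  have hex : ∃ m, (⇑D)^[m] z = 0 := dhat_locally_nilpotent k n z
  set m := Nat.find hex with hm
  have hmz : Z m = 0 := Nat.find_spec hex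
  have hmin : ∀ l, l < m → Z l ≠ 0 := fun l hl => Nat.find_min hex hl
  have hm0 : m ≠ 0 := by
    intro h
    exact hz0 (by simpa [hZ, h] using hmz)
  obtain ⟨j, hj⟩ : ∃ j, m = j + 1 := ⟨m - 1, by omega⟩
  rw [hj] at hmz
  have hzj : Z j ≠ 0 := hmin j (by omega)
  have h0 : (((j:k)+1) * ((w:k) - (j:k))) • Z j = 0 := by
    rw [← lower j, hmz, map_zero]
  rcases smul_eq_zero.mp h0 with hc | hzero
  · rcases mul_eq_zero.mp hc with h1 | h2
    · exact absurd h1 (Nat.cast_add_one_ne_zero j)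
    · have hwj : (w:k) = (j:k) := sub_eq_zero.mp h2
      have : w = j := Nat.cast_injective hwj
      subst this
      exact ⟨hzj, hmz⟩
  · exact absurd hzero hzj
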